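/- Let q be a prime power and let f ∈ F_q[T][X] be primitive, irreducible as a polynomial in X over F_q(T), with deg_T f ≥ 1, and suppose f splits completely over F_q((T)) with every root lying in the power series ring F_q⟦T⟧ (i.e. every root has T-adic valuation ≥ 0). Then deg_X f ≤ q·deg_T f. If moreover every root has T-adic valuation exactly 0 (i.e. every root is a unit of F_q⟦T⟧), then deg_X f ≤ (q−1)·deg_T f. (Equivalently: a nonconstant totally T-adic integer has height ≥ 1/q, and a nonconstant totally T-adic unit has height ≥ 1/(q−1).) -/

import Mathlib

open Polynomial

set_option maxHeartbeats 1000000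

/-- The `T`-degree of `f ∈ F[T][X]`: the maximal `T`-degree of its coefficients
(the variable of the inner polynomial ring plays the role of `T`). -/
noncomputable def degT {F : Type*} [Field F] (f : Polynomial (Polynomial F)) : ℕ :=
  f.support.sup fun i => (f.coeff i).natDegree

/-- View `f ∈ F[T][X]` as a polynomial in `X` over the rational function field `F(T)`. -/
noncomputable def toRat {F : Type*} [Field F] (f : Polynomial (Polynomial F)) :
    Polynomial (RatFunc F) :=
  f.map (algebraMap (Polynomial F) (RatFunc F))

/-- `f ∈ F[T][X]` splits completely (into linear factors) over the
Laurent series field `F((T))`. -/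
def SplitsCompletely {F : Type*} [Field F] (f : Polynomial (Polynomial F)) : Prop :=
  Polynomial.Splits (f.map (algebraMap (Polynomial F) (LaurentSeries F)))

section Aux

variable {F : Type*} [Field F]

lemma coeff_algebraMap_laurent (p : Polynomial F) (i : ℤ) :
    (algebraMap (Polynomial F) (LaurentSeries F) p).coeff i =
      if i < 0 then 0 else p.coeff i.natAbs := by
  rw [Polynomial.algebraMap_hahnSeries_apply]
  exact (PowerSeries.coeff_coe (p : PowerSeries F) i).trans (by rw [Polynomial.coeff_coe])

lemma order_algebraMap_nonneg (p : Polynomial F) :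
    0 ≤ (algebraMap (Polynomial F) (LaurentSeries F) p).order := by
  by_cases hx : algebraMap (Polynomial F) (LaurentSeries F) p = 0
  · rw [hx, HahnSeries.order_zero]
  by_contra h
  push_neg at h
  apply (mt HahnSeries.coeff_order_eq_zero.mp hx)
  rw [coeff_algebraMap_laurent, if_pos h]

lemma order_algebraMap_le {p : Polynomial F} (hp : p ≠ 0) :
    (algebraMap (Polynomial F) (LaurentSeries F) p).order ≤ (p.natDegree : ℤ) := by
  apply HahnSeries.order_le_of_coeff_ne_zero
  rw [coeff_algebraMap_laurent, if_neg (by omega : ¬ ((p.natDegree : ℤ) < 0))]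
  simpa using Polynomial.leadingCoeff_ne_zero.mpr hp

lemma order_multiset_prod (s : Multiset (LaurentSeries F)) (hs : ∀ x ∈ s, x ≠ 0) :
    s.prod.order = (s.map HahnSeries.order).sum := by
  induction s using Multiset.induction_on with
  | empty => simp [HahnSeries.order_one]
  | cons a t ih =>
    have ha : a ≠ 0 := hs a (Multiset.mem_cons_self a t)
    have ht : ∀ x ∈ t, x ≠ 0 := fun x hx => hs x (Multiset.mem_cons_of_mem hx)
    have htp : t.prod ≠ 0 := Multiset.prod_ne_zero (fun h0 => ht 0 h0 rfl)
    rw [Multiset.prod_cons, Multiset.map_cons, Multiset.sum_cons,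
      HahnSeries.order_mul ha htp, ih ht]

lemma natDegree_eval_C_le (f : Polynomial (Polynomial F)) (c : F) :
    (f.eval (Polynomial.C c)).natDegree ≤ degT f := by
  rw [Polynomial.eval_eq_sum_range]
  apply Polynomial.natDegree_sum_le_of_forall_le
  intro i _
  refine Polynomial.natDegree_mul_le.trans ?_
  have h1 : ((Polynomial.C c : Polynomial F) ^ i).natDegree = 0 := by
    simp [Polynomial.natDegree_pow]
  rw [h1, add_zero]
  by_cases h : f.coeff i = 0
  · simp [h]
  · exact Finset.le_sup (s := f.support) (f := fun j => (f.coeff j).natDegree)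
      (Polynomial.mem_support_iff.mpr h)

end Aux

/-- A nonconstant totally $T$-adic integer has height at least $1/q$, and a
nonconstant totally $T$-adic unit has height at least $1/(q-1)$: with all roots of
$f$ of valuation $≥ 0$ one has $\deg_X f ≤ q·\deg_T f$, and with all roots of
valuation exactly $0$ one has $\deg_X f ≤ (q-1)·\deg_T f$. -/
theorem integer_and_unit_height_bounds {F : Type*} [Field F] [Fintype F]
    (f : Polynomial (Polynomial F)) (hprim : f.IsPrimitive)
    (hirr : Irreducible (toRat f))
    (hT : 1 ≤ degT f)
    (hsplit : SplitsCompletely f)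
    (hint : ∀ β : LaurentSeries F,
      (f.map (algebraMap (Polynomial F) (LaurentSeries F))).IsRoot β → 0 ≤ β.order) :
    f.natDegree ≤ Fintype.card F * degT f ∧
      ((∀ β : LaurentSeries F,
          (f.map (algebraMap (Polynomial F) (LaurentSeries F))).IsRoot β →
            β ≠ 0 ∧ β.order = 0) →
        f.natDegree ≤ (Fintype.card F - 1) * degT f) := by
  classical
  have hq2 : 2 ≤ Fintype.card F := Fintype.one_lt_card
  have hinj : Function.Injective (algebraMap (Polynomial F) (LaurentSeries F)) :=
    Polynomial.algebraMap_hahnSeries_injective _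
  have hinjR : Function.Injective (algebraMap (Polynomial F) (RatFunc F)) :=
    IsFractionRing.injective _ _
  have hf0 : f ≠ 0 := by
    intro h
    have h0 : Irreducible (0 : Polynomial (RatFunc F)) := by
      simpa [toRat, h] using hirr
    exact not_irreducible_zero h0
  have hndeg_rat : (toRat f).natDegree = f.natDegree :=
    Polynomial.natDegree_map_eq_of_injective hinjR f
  have hn1 : 1 ≤ f.natDegree := by
    rw [← hndeg_rat]; exact hirr.natDegree_pos
  set g : Polynomial (LaurentSeries F) :=
    f.map (algebraMap (Polynomial F) (LaurentSeries F)) with hg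
  have hg0 : g ≠ 0 := by
    rw [hg, Ne, Polynomial.map_eq_zero_iff hinj]; exact hf0
  have hsp : Polynomial.Splits g := hsplit
  have hsp' : Polynomial.Splits g :=
    hsp
  have hndeg_g : g.natDegree = f.natDegree :=
    Polynomial.natDegree_map_eq_of_injective hinj f
  set R : Multiset (LaurentSeries F) := g.roots with hR
  have hcard : f.natDegree = Multiset.card R := by
    rw [hR, Polynomial.splits_iff_card_roots.mp hsp', hndeg_g]
  have hmem : ∀ β ∈ R, g.IsRoot β := fun β hb =>
    (Polynomial.mem_roots hg0).mp hb
  have hord : ∀ β ∈ R, 0 ≤ β.order := fun β hb => hint β (hmem β hb)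
  -- no constant is a root once the degree is at least 2
  have hnoconst : 2 ≤ f.natDegree → ∀ c : F, f.eval (Polynomial.C c) ≠ 0 := by
    intro hn2 c hc
    have hroot : (toRat f).IsRoot (algebraMap (Polynomial F) (RatFunc F) (Polynomial.C c)) := by
      rw [Polynomial.IsRoot, toRat, Polynomial.eval_map, Polynomial.eval₂_at_apply, hc, map_zero]
    obtain ⟨u, hu⟩ := Polynomial.dvd_iff_isRoot.mpr hroot
    rcases hirr.isUnit_or_isUnit hu with h | h
    · exact Polynomial.not_isUnit_X_sub_C _ h
    · have hu0 : u ≠ 0 := by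
        intro h0; rw [h0, mul_zero] at hu; exact hirr.ne_zero hu
      have hdeg := Polynomial.natDegree_eq_zero_of_isUnit h
      have h1 : (toRat f).natDegree = 1 := by
        rw [hu, Polynomial.natDegree_mul (Polynomial.X_sub_C_ne_zero _) hu0,
          Polynomial.natDegree_X_sub_C, hdeg]
      omega
  -- the key count: for each residue c, at most degT f roots have residue c
  have key : 2 ≤ f.natDegree → ∀ c : F,
      Multiset.card (R.filter (fun β => β.coeff 0 = c)) ≤ degT f := by
    intro hn2 c
    set a : LaurentSeries F :=
      algebraMap (Polynomial F) (LaurentSeries F) (Polynomial.C c) with ha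
    have hacoeff : ∀ i : ℤ, a.coeff i = if i < 0 then 0 else if i = 0 then c else 0 := by
      intro i
      rw [ha, coeff_algebraMap_laurent]
      rcases lt_trichotomy i 0 with h | h | h
      · rw [if_pos h, if_pos h]
      · subst h; simp
      · rw [if_neg (by omega : ¬ (i < 0)), if_neg (by omega : ¬ (i < 0)), if_neg h.ne',
          Polynomial.coeff_C, if_neg (by omega)]
    have hpne : f.eval (Polynomial.C c) ≠ 0 := hnoconst hn2 c
    have heval : g.eval a
        = algebraMap (Polynomial F) (LaurentSeries F) (f.eval (Polynomial.C c)) := by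
      rw [hg, Polynomial.eval_map, ha, Polynomial.eval₂_at_apply]
    have hnr : ∀ β ∈ R, a - β ≠ 0 := by
      intro β hb h0
      apply hpne
      apply hinj
      rw [← heval, map_zero]
      have hba : a = β := sub_eq_zero.mp h0
      rw [hba]
      exact hmem β hb
    -- order of a - β is nonnegative, and positive when the residue is c
    have hsub_nonneg : ∀ β ∈ R, 0 ≤ (a - β).order := by
      intro β hb
      by_contra h
      push_neg at h
      apply (mt HahnSeries.coeff_order_eq_zero.mp (hnr β hb))
      rw [HahnSeries.coeff_sub, hacoeff, if_pos h,
        HahnSeries.coeff_eq_zero_of_lt_order (lt_of_lt_of_le h (hord β hb)), sub_zero]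
    have hsub_pos : ∀ β ∈ R, β.coeff 0 = c → 1 ≤ (a - β).order := by
      intro β hb hc0
      have hge := hsub_nonneg β hb
      by_contra h
      push_neg at h
      have hordeq : (a - β).order = 0 := le_antisymm (by omega) hge
      apply (mt HahnSeries.coeff_order_eq_zero.mp (hnr β hb))
      rw [hordeq, HahnSeries.coeff_sub, hacoeff, if_neg (lt_irrefl 0), if_pos rfl, hc0, sub_self]
    -- product formula for the evaluation
    have heval2 : g.eval a = g.leadingCoeff * (R.map fun β => a - β).prod := by
      conv_lhs => rw [hsp'.eq_prod_roots]
      rw [Polynomial.eval_mul, Polynomial.eval_C, Polynomial.eval_multiset_prod,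
        Multiset.map_map]
      simp [Function.comp, ← hR]
    have hlc : g.leadingCoeff = algebraMap (Polynomial F) (LaurentSeries F) f.leadingCoeff := by
      rw [hg, Polynomial.leadingCoeff, Polynomial.natDegree_map_eq_of_injective hinj,
        Polynomial.coeff_map, Polynomial.leadingCoeff]
    have hlc0 : g.leadingCoeff ≠ 0 := Polynomial.leadingCoeff_ne_zero.mpr hg0
    have hprodne : (R.map fun β => a - β).prod ≠ 0 :=
      Multiset.prod_ne_zero (by
        intro h0
        obtain ⟨β, hb, hb0⟩ := Multiset.mem_map.mp h0
        exact hnr β hb hb0)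
    have horder : (algebraMap (Polynomial F) (LaurentSeries F)
        (f.eval (Polynomial.C c))).order
        = g.leadingCoeff.order + ((R.map fun β => a - β).map HahnSeries.order).sum := by
      rw [← heval, heval2, HahnSeries.order_mul hlc0 hprodne,
        order_multiset_prod _ (by
          intro x hx
          obtain ⟨β, hb, rfl⟩ := Multiset.mem_map.mp hx
          exact hnr β hb)]
    -- upper bound on the order
    have hub : (algebraMap (Polynomial F) (LaurentSeries F)
        (f.eval (Polynomial.C c))).order ≤ (degT f : ℤ) :=
      (order_algebraMap_le hpne).trans (by exact_mod_cast natDegree_eval_C_le f c)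
    -- lower bound: the count of roots with residue c
    have hlb : (Multiset.card (R.filter (fun β => β.coeff 0 = c)) : ℤ)
        ≤ ((R.map fun β => a - β).map HahnSeries.order).sum := by
      rw [Multiset.map_map]
      have hsplitR := Multiset.filter_add_not (fun β => β.coeff 0 = c) R
      conv_rhs => rw [← hsplitR]
      rw [Multiset.map_add, Multiset.sum_add]
      have hA : (Multiset.card (R.filter (fun β => β.coeff 0 = c)) : ℤ)
          ≤ ((R.filter (fun β => β.coeff 0 = c)).map
              ((HahnSeries.order ∘ fun β => a - β))).sum := by
        have h := Multiset.card_nsmul_le_sum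
          (s := (R.filter (fun β => β.coeff 0 = c)).map
            ((HahnSeries.order ∘ fun β => a - β))) (a := (1 : ℤ))
          (by
            intro x hx
            obtain ⟨β, hb, rfl⟩ := Multiset.mem_map.mp hx
            obtain ⟨hb1, hb2⟩ := Multiset.mem_filter.mp hb
            exact hsub_pos β hb1 hb2)
        rw [Multiset.card_map] at h
        simpa using h
      have hB : 0 ≤ ((R.filter (fun β => ¬ β.coeff 0 = c)).map
          ((HahnSeries.order ∘ fun β => a - β))).sum := by
        apply Multiset.sum_nonneg
        intro x hx
        obtain ⟨β, hb, rfl⟩ := Multiset.mem_map.mp hx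
        exact hsub_nonneg β (Multiset.mem_of_mem_filter hb)
      linarith
    have hlcord : 0 ≤ g.leadingCoeff.order := by
      rw [hlc]; exact order_algebraMap_nonneg _
    have hfin : (Multiset.card (R.filter (fun β => β.coeff 0 = c)) : ℤ) ≤ (degT f : ℤ) := by
      rw [horder] at hub
      linarith
    exact_mod_cast hfin
  -- total count over residues
  have hsum : ∑ c ∈ Finset.univ,
      Multiset.card (R.filter (fun β => β.coeff 0 = c)) = Multiset.card R := by
    have h1 : ∀ c : F, Multiset.card (R.filter (fun β => β.coeff 0 = c))
        = Multiset.count c (R.map (fun β => β.coeff 0)) := by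
      intro c
      rw [Multiset.count_map]
      congr 1
      exact Multiset.filter_congr (fun β _ => by constructor <;> exact fun h => h.symm)
    rw [Finset.sum_congr rfl (fun c _ => h1 c)]
    have h2 : ∑ c ∈ (R.map (fun β => β.coeff 0)).toFinset,
        Multiset.count c (R.map (fun β => β.coeff 0))
        = ∑ c ∈ Finset.univ, Multiset.count c (R.map (fun β => β.coeff 0)) := by
      apply Finset.sum_subset (Finset.subset_univ _)
      intro x _ hx
      exact Multiset.count_eq_zero.mpr (fun h => hx (Multiset.mem_toFinset.mpr h))
    rw [← h2, Multiset.toFinset_sum_count_eq, Multiset.card_map]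
  rcases Nat.lt_or_ge f.natDegree 2 with hn | hn2
  · have h1 : f.natDegree = 1 := by omega
    constructor
    · have : 1 * 1 ≤ Fintype.card F * degT f := Nat.mul_le_mul (by omega) hT
      omega
    · intro _
      have : 1 * 1 ≤ (Fintype.card F - 1) * degT f := Nat.mul_le_mul (by omega) hT
      omega
  · constructor
    · calc f.natDegree = ∑ c ∈ Finset.univ,
            Multiset.card (R.filter (fun β => β.coeff 0 = c)) := by rw [hsum, hcard]
        _ ≤ ∑ _c ∈ (Finset.univ : Finset F), degT f :=
            Finset.sum_le_sum (fun c _ => key hn2 c)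
        _ = Fintype.card F * degT f := by
            rw [Finset.sum_const, Finset.card_univ, smul_eq_mul]
    · intro hunit
      have h0 : R.filter (fun β => β.coeff 0 = (0 : F)) = 0 := by
        rw [Multiset.filter_eq_nil]
        intro β hb hc
        obtain ⟨hb0, hbord⟩ := hunit β (hmem β hb)
        exact (mt HahnSeries.coeff_order_eq_zero.mp hb0) (by rw [hbord]; exact hc)
      calc f.natDegree = ∑ c ∈ Finset.univ,
            Multiset.card (R.filter (fun β => β.coeff 0 = c)) := by rw [hsum, hcard]
        _ = ∑ c ∈ Finset.univ.erase (0 : F),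
            Multiset.card (R.filter (fun β => β.coeff 0 = c)) := by
            rw [← Finset.add_sum_erase _ _ (Finset.mem_univ (0 : F)), h0]
            simp
        _ ≤ ∑ _c ∈ Finset.univ.erase (0 : F), degT f :=
            Finset.sum_le_sum (fun c _ => key hn2 c)
        _ = (Fintype.card F - 1) * degT f := by
            rw [Finset.sum_const, Finset.card_erase_of_mem (Finset.mem_univ _),
              Finset.card_univ, smul_eq_mul]
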